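/- Let m ≥ 1 and let L be a positive integer with 2m | L such that L/(2m) is even. Then the half-shifted correlation matrix G^{(z^m+z^{−m})}(L) has real entries and is orthogonal: G^{(z^m+z^{−m})}(L) · (G^{(z^m+z^{−m})}(L))^T = I_L. -/

import Mathlib

open scoped BigOperators Matrix

/-- `θ_k = (2π/L)(k - 1/2)` for `k = 1, …, L` (here `k : Fin L` is the 0-based index,
so `θ_k = (2π/L)(k + 1/2)`). -/
noncomputable def theta (L : ℕ) (k : Fin L) : ℝ :=
  2 * Real.pi / L * ((k : ℝ) + 1 / 2)

/-- The half-shifted correlation matrix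
`G^{(f)}(L)_{nm} = ((-1)^{n-m}/L) Σ_{k=1}^{L} (f(e^{iθ_k})/|f(e^{iθ_k})|) e^{iθ_k (n-m)}`. -/
noncomputable def Gf (L : ℕ) (f : ℂ → ℂ) : Matrix (Fin L) (Fin L) ℂ :=
  Matrix.of fun n m : Fin L =>
    (-1 : ℂ) ^ ((n : ℤ) - (m : ℤ)) / (L : ℂ) *
      ∑ k : Fin L,
        f (Complex.exp (Complex.I * (theta L k : ℂ))) /
            ((‖f (Complex.exp (Complex.I * (theta L k : ℂ)))‖ : ℝ) : ℂ) *
          Complex.exp (Complex.I * (theta L k : ℂ) * (((n : ℤ) - (m : ℤ) : ℤ) : ℂ))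

namespace ZmAux

open Complex

/-- the sign `cos(mθ_k)/|cos(mθ_k)|`. -/
noncomputable def sg (m L : ℕ) (k : Fin L) : ℝ :=
  Real.cos (m * theta L k) / |Real.cos (m * theta L k)|

lemma theta_rev (L : ℕ) (hL : 0 < L) (k : Fin L) :
    theta L k.rev = 2 * Real.pi - theta L k := by
  have hkL : (k : ℕ) + 1 ≤ L := k.isLt
  have hk : ((k.rev : Fin L) : ℝ) = (L : ℝ) - ((k : ℕ) : ℝ) - 1 := by
    rw [Fin.val_rev]
    push_cast [Nat.cast_sub hkL]
    ring
  have hL' : (L : ℝ) ≠ 0 := Nat.cast_ne_zero.mpr hL.ne'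
  unfold theta
  rw [hk]
  field_simp
  ring

lemma cos_ne (m L : ℕ) (hm : 1 ≤ m) (hL : 0 < L) (hdvd : 2 * m ∣ L)
    (hMeven : Even (L / (2 * m))) (k : Fin L) :
    Real.cos (m * theta L k) ≠ 0 := by
  obtain ⟨M, hM⟩ := hdvd
  have hMe : Even M := by
    rwa [hM, Nat.mul_div_cancel_left _ (by positivity)] at hMeven
  obtain ⟨t, ht⟩ := hMe
  intro h
  rw [Real.cos_eq_zero_iff] at h
  obtain ⟨n, hn⟩ := h
  have hπ : Real.pi ≠ 0 := Real.pi_ne_zero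
  have hL0 : (L : ℝ) ≠ 0 := Nat.cast_ne_zero.mpr hL.ne'
  unfold theta at hn
  have key : ((2 * m * (2 * (k : ℕ) + 1) : ℕ) : ℝ) * Real.pi
      = ((L : ℕ) : ℝ) * (2 * (n : ℝ) + 1) * Real.pi := by
    field_simp at hn
    push_cast
    linear_combination Real.pi * hn
  have key2 : ((2 * m * (2 * (k : ℕ) + 1) : ℕ) : ℝ)
      = ((L : ℕ) : ℝ) * (2 * (n : ℝ) + 1) :=
    mul_right_cancel₀ hπ key
  have key3 : (2 * m * (2 * (k : ℕ) + 1) : ℤ) = (L : ℤ) * (2 * n + 1) := by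
    exact_mod_cast key2
  have hLZ : (L : ℤ) = 2 * m * M := by exact_mod_cast hM
  rw [hLZ] at key3
  have ht' : (M : ℤ) = 2 * t := by rw [ht]; push_cast; ring
  have hmz : (2 * (m : ℤ)) ≠ 0 := by positivity
  have key4 : (2 * (k : ℤ) + 1) = 2 * ((t : ℤ) * (2 * n + 1)) := by
    apply mul_left_cancel₀ hmz
    linear_combination key3 + (2 * (m:ℤ) * (2*n+1)) * ht'
  set x := (t : ℤ) * (2 * n + 1) with hx
  omega

lemma sg_rev (m L : ℕ) (hL : 0 < L) (k : Fin L) :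
    sg m L k.rev = sg m L k := by
  unfold sg
  rw [theta_rev L hL k]
  have hc : Real.cos ((m : ℝ) * (2 * Real.pi - theta L k))
      = Real.cos ((m : ℝ) * theta L k) := by
    rw [show (m : ℝ) * (2 * Real.pi - theta L k)
        = ((m : ℤ) : ℝ) * (2 * Real.pi) - (m : ℝ) * theta L k by push_cast; ring]
    exact Real.cos_int_mul_two_pi_sub _ m
  rw [hc]

lemma sg_mul_self (m L : ℕ) (k : Fin L) (hc : Real.cos (m * theta L k) ≠ 0) :
    sg m L k * sg m L k = 1 := by
  unfold sg
  rw [div_mul_div_comm, abs_mul_abs_self]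
  exact div_self (mul_ne_zero hc hc)

lemma f_val (mm : ℕ) (x : ℝ) :
    (Complex.exp (Complex.I * (x : ℂ))) ^ (mm : ℤ)
      + (Complex.exp (Complex.I * (x : ℂ))) ^ (-(mm : ℤ))
      = 2 * ((Real.cos (mm * x) : ℝ) : ℂ) := by
  rw [← Complex.exp_int_mul, ← Complex.exp_int_mul, Complex.ofReal_cos]
  push_cast
  rw [show (mm : ℂ) * (Complex.I * x) = ((mm : ℂ) * x) * Complex.I by ring,
      show (-(mm : ℂ)) * (Complex.I * x) = -(((mm : ℂ) * x) * Complex.I) by ring]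
  rw [Complex.cos]
  ring

lemma f_ratio (m L : ℕ) (k : Fin L) (hc : Real.cos (m * theta L k) ≠ 0) :
    ((Complex.exp (Complex.I * (theta L k : ℂ))) ^ (m : ℤ)
        + (Complex.exp (Complex.I * (theta L k : ℂ))) ^ (-(m : ℤ))) /
      ((‖(Complex.exp (Complex.I * (theta L k : ℂ))) ^ (m : ℤ)
        + (Complex.exp (Complex.I * (theta L k : ℂ))) ^ (-(m : ℤ))‖ : ℝ) : ℂ)
      = ((sg m L k : ℝ) : ℂ) := by
  rw [f_val m (theta L k)]
  have habs : ‖(2 * ((Real.cos (m * theta L k) : ℝ) : ℂ))‖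
      = 2 * |Real.cos (m * theta L k)| := by
    rw [norm_mul, Complex.norm_two, Complex.norm_real, Real.norm_eq_abs]
  rw [habs]
  unfold sg
  have h1 : |Real.cos (m * theta L k)| ≠ 0 := abs_ne_zero.mpr hc
  push_cast
  rw [mul_div_mul_left _ _ (two_ne_zero)]

lemma sum_exp_pow (L : ℕ) (hL : 0 < L) (d : ℤ) :
    ∑ k : Fin L, Complex.exp (2 * (Real.pi : ℂ) * Complex.I * (d : ℂ) / (L : ℂ)) ^ (k : ℕ)
      = if (L : ℤ) ∣ d then (L : ℂ) else 0 := by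
  have hL0 : (L : ℂ) ≠ 0 := Nat.cast_ne_zero.mpr hL.ne'
  by_cases hd : (L : ℤ) ∣ d
  · obtain ⟨t, rfl⟩ := hd
    have h1 : Complex.exp (2 * (Real.pi : ℂ) * Complex.I * ((L : ℂ) * (t : ℂ)) / (L : ℂ)) = 1 := by
      rw [show (2 * (Real.pi : ℂ) * Complex.I * ((L : ℂ) * (t : ℂ)) / (L : ℂ))
          = (t : ℂ) * (2 * (Real.pi : ℂ) * Complex.I) by field_simp]
      exact Complex.exp_int_mul_two_pi_mul_I t
    push_cast
    simp [h1]
  · have hζL : (Complex.exp (2 * (Real.pi : ℂ) * Complex.I * (d : ℂ) / (L : ℂ))) ^ L = 1 := by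
      rw [← Complex.exp_nat_mul, show (L : ℂ) * (2 * (Real.pi : ℂ) * Complex.I * (d : ℂ) / (L : ℂ))
          = (d : ℂ) * (2 * (Real.pi : ℂ) * Complex.I) by field_simp]
      exact Complex.exp_int_mul_two_pi_mul_I d
    have h2π : (2 * (Real.pi : ℂ) * Complex.I) ≠ 0 :=
      mul_ne_zero (mul_ne_zero two_ne_zero (Complex.ofReal_ne_zero.mpr Real.pi_ne_zero))
        Complex.I_ne_zero
    have hζ1 : Complex.exp (2 * (Real.pi : ℂ) * Complex.I * (d : ℂ) / (L : ℂ)) ≠ 1 := by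
      intro h
      rw [Complex.exp_eq_one_iff] at h
      obtain ⟨n, hn⟩ := h
      apply hd
      have h3 : (2 * (Real.pi : ℂ) * Complex.I) * (d : ℂ)
          = (2 * (Real.pi : ℂ) * Complex.I) * ((n : ℂ) * L) := by
        field_simp at hn
        linear_combination (2 * (Real.pi : ℂ) * Complex.I) * hn
      have h4 : (d : ℂ) = (n : ℂ) * L := mul_left_cancel₀ h2π h3
      exact ⟨n, by exact_mod_cast h4.trans (mul_comm _ _)⟩
    rw [Fin.sum_univ_eq_sum_range, geom_sum_eq hζ1, hζL]
    simp [hd]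

lemma sum_exp_theta (L : ℕ) (hL : 0 < L) (d : ℤ) :
    ∑ k : Fin L, Complex.exp (Complex.I * (theta L k : ℂ) * (d : ℂ))
      = Complex.exp ((Real.pi : ℂ) * Complex.I * (d : ℂ) / (L : ℂ))
          * (if (L : ℤ) ∣ d then (L : ℂ) else 0) := by
  have hL0 : (L : ℂ) ≠ 0 := Nat.cast_ne_zero.mpr hL.ne'
  rw [← sum_exp_pow L hL d, Finset.mul_sum]
  apply Finset.sum_congr rfl
  intro k _
  rw [← Complex.exp_nat_mul, ← Complex.exp_add]
  congr 1
  unfold theta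
  push_cast
  field_simp
  ring

lemma dvd_iff_eq (L : ℕ) (n l : Fin L) : (L : ℤ) ∣ ((n : ℤ) - (l : ℤ)) ↔ n = l := by
  constructor
  · intro h
    have hn := n.isLt
    have hl := l.isLt
    have h0 : ((n : ℤ) - (l : ℤ)) = 0 :=
      Int.eq_zero_of_dvd_of_natAbs_lt_natAbs h (by omega)
    exact Fin.ext (by omega)
  · rintro rfl; simp

lemma sum_B (L : ℕ) (hL : 0 < L) (k k' : Fin L) :
    ∑ p : Fin L,
        Complex.exp (-(Complex.I * ((theta L k : ℂ) + (Real.pi : ℂ)) * ((p : ℕ) : ℂ)))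
          * Complex.exp (-(Complex.I * ((theta L k' : ℂ) + (Real.pi : ℂ)) * ((p : ℕ) : ℂ)))
      = if k' = k.rev then (L : ℂ) else 0 := by
  have hL0 : (L : ℂ) ≠ 0 := Nat.cast_ne_zero.mpr hL.ne'
  have key : ∀ p : Fin L,
      Complex.exp (-(Complex.I * ((theta L k : ℂ) + (Real.pi : ℂ)) * ((p : ℕ) : ℂ)))
          * Complex.exp (-(Complex.I * ((theta L k' : ℂ) + (Real.pi : ℂ)) * ((p : ℕ) : ℂ)))
        = Complex.exp (2 * (Real.pi : ℂ) * Complex.I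
            * ((-((k : ℤ) + (k' : ℤ) + 1) : ℤ) : ℂ) / (L : ℂ)) ^ (p : ℕ) := by
    intro p
    rw [← Complex.exp_add, ← Complex.exp_nat_mul]
    rw [show -(Complex.I * ((theta L k : ℂ) + (Real.pi : ℂ)) * ((p : ℕ) : ℂ))
          + -(Complex.I * ((theta L k' : ℂ) + (Real.pi : ℂ)) * ((p : ℕ) : ℂ))
        = ((p : ℕ) : ℂ) * (2 * (Real.pi : ℂ) * Complex.I
            * ((-((k : ℤ) + (k' : ℤ) + 1) : ℤ) : ℂ) / (L : ℂ))
          + ((-(p : ℕ) : ℤ) : ℂ) * (2 * (Real.pi : ℂ) * Complex.I) by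
        unfold theta; push_cast; field_simp; ring]
    rw [Complex.exp_add, Complex.exp_int_mul_two_pi_mul_I, mul_one]
  rw [Finset.sum_congr rfl (fun p _ => key p), sum_exp_pow L hL _]
  have hiff : ((L : ℤ) ∣ -((k : ℤ) + (k' : ℤ) + 1)) ↔ k' = k.rev := by
    rw [Int.dvd_neg]
    constructor
    · intro h
      have h2 : (L : ℤ) ∣ ((k : ℤ) + (k' : ℤ) + 1) - (L : ℤ) := dvd_sub h (dvd_refl _)
      have hk := k.isLt
      have hk' := k'.isLt
      have h0 : ((k : ℤ) + (k' : ℤ) + 1) - (L : ℤ) = 0 :=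
        Int.eq_zero_of_dvd_of_natAbs_lt_natAbs h2 (by omega)
      apply Fin.ext
      rw [Fin.val_rev]
      omega
    · rintro rfl
      have hk := k.isLt
      have hv : (k.rev : ℕ) = L - (k + 1) := Fin.val_rev k
      have : ((k : ℤ) + (k.rev : ℤ) + 1) = (L : ℤ) := by omega
      rw [this]
  simp only [hiff]

lemma Gf_entry (m L : ℕ) (hL : 0 < L)
    (hc : ∀ k : Fin L, Real.cos (m * theta L k) ≠ 0) (n l : Fin L) :
    Gf L (fun z => z ^ (m : ℤ) + z ^ (-(m : ℤ))) n l
      = (1 / (L : ℂ)) * ∑ k : Fin L, ((sg m L k : ℝ) : ℂ)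
          * (Complex.exp (Complex.I * ((theta L k : ℂ) + (Real.pi : ℂ)) * ((n : ℕ) : ℂ))
             * Complex.exp (-(Complex.I * ((theta L k : ℂ) + (Real.pi : ℂ)) * ((l : ℕ) : ℂ)))) := by
  unfold Gf
  simp only [Matrix.of_apply]
  rw [Finset.mul_sum, Finset.mul_sum]
  apply Finset.sum_congr rfl
  intro k _
  rw [f_ratio m L k (hc k)]
  have hd : ((-1 : ℂ)) ^ ((n : ℤ) - (l : ℤ))
      = Complex.exp (Complex.I * (Real.pi : ℂ) * ((((n : ℤ) - (l : ℤ)) : ℤ) : ℂ)) := by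
    rw [show (Complex.I * (Real.pi : ℂ) * ((((n : ℤ) - (l : ℤ)) : ℤ) : ℂ))
        = ((((n : ℤ) - (l : ℤ)) : ℤ) : ℂ) * ((Real.pi : ℂ) * Complex.I) by ring,
      Complex.exp_int_mul, Complex.exp_pi_mul_I]
  rw [hd]
  rw [show Complex.exp (Complex.I * ((theta L k : ℂ) + (Real.pi : ℂ)) * ((n : ℕ) : ℂ))
        * Complex.exp (-(Complex.I * ((theta L k : ℂ) + (Real.pi : ℂ)) * ((l : ℕ) : ℂ)))
      = Complex.exp (Complex.I * ((theta L k : ℂ) + (Real.pi : ℂ)) * ((n : ℕ) : ℂ)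
          + -(Complex.I * ((theta L k : ℂ) + (Real.pi : ℂ)) * ((l : ℕ) : ℂ)))
      from (Complex.exp_add _ _).symm]
  rw [show Complex.I * ((theta L k : ℂ) + (Real.pi : ℂ)) * ((n : ℕ) : ℂ)
        + -(Complex.I * ((theta L k : ℂ) + (Real.pi : ℂ)) * ((l : ℕ) : ℂ))
      = Complex.I * (Real.pi : ℂ) * ((((n : ℤ) - (l : ℤ)) : ℤ) : ℂ)
        + Complex.I * (theta L k : ℂ) * ((((n : ℤ) - (l : ℤ)) : ℤ) : ℂ) by push_cast; ring]
  rw [Complex.exp_add]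
  ring

lemma entry_conj (m L : ℕ) (hL : 0 < L)
    (hc : ∀ k : Fin L, Real.cos (m * theta L k) ≠ 0) (n l : Fin L) :
    (starRingEnd ℂ) (Gf L (fun z => z ^ (m : ℤ) + z ^ (-(m : ℤ))) n l)
      = Gf L (fun z => z ^ (m : ℤ) + z ^ (-(m : ℤ))) n l := by
  rw [Gf_entry m L hL hc n l, map_mul, map_sum]
  have h1 : (starRingEnd ℂ) (1 / (L : ℂ)) = 1 / (L : ℂ) := by rw [map_div₀, map_one, map_natCast]
  rw [h1]
  congr 1
  have hT : ∀ k : Fin L,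
      (starRingEnd ℂ) (((sg m L k : ℝ) : ℂ)
          * (Complex.exp (Complex.I * ((theta L k : ℂ) + (Real.pi : ℂ)) * ((n : ℕ) : ℂ))
             * Complex.exp (-(Complex.I * ((theta L k : ℂ) + (Real.pi : ℂ)) * ((l : ℕ) : ℂ)))))
      = ((sg m L k : ℝ) : ℂ)
          * (Complex.exp (-(Complex.I * ((theta L k : ℂ) + (Real.pi : ℂ)) * ((n : ℕ) : ℂ)))
             * Complex.exp (Complex.I * ((theta L k : ℂ) + (Real.pi : ℂ)) * ((l : ℕ) : ℂ))) := by
    intro k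
    rw [map_mul, map_mul, ← Complex.exp_conj, ← Complex.exp_conj, Complex.conj_ofReal]
    congr 2
    · simp only [map_mul, map_add, Complex.conj_I, Complex.conj_ofReal, map_natCast]
      ring
    · simp only [map_neg, map_mul, map_add, Complex.conj_I, Complex.conj_ofReal, map_natCast]
      ring
  rw [Finset.sum_congr rfl (fun k _ => hT k)]
  rw [← Equiv.sum_comp (Fin.revPerm (n := L))
    (fun k : Fin L => ((sg m L k : ℝ) : ℂ)
      * (Complex.exp (-(Complex.I * ((theta L k : ℂ) + (Real.pi : ℂ)) * ((n : ℕ) : ℂ)))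
         * Complex.exp (Complex.I * ((theta L k : ℂ) + (Real.pi : ℂ)) * ((l : ℕ) : ℂ))))]
  apply Finset.sum_congr rfl
  intro k _
  simp only [Fin.revPerm_apply]
  rw [sg_rev m L hL k, theta_rev L hL k]
  congr 1
  rw [← Complex.exp_add, ← Complex.exp_add]
  rw [show -(Complex.I * (((2 * Real.pi - theta L k : ℝ) : ℂ) + (Real.pi : ℂ)) * ((n : ℕ) : ℂ))
        + Complex.I * (((2 * Real.pi - theta L k : ℝ) : ℂ) + (Real.pi : ℂ)) * ((l : ℕ) : ℂ)
      = (Complex.I * ((theta L k : ℂ) + (Real.pi : ℂ)) * ((n : ℕ) : ℂ)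
          + -(Complex.I * ((theta L k : ℂ) + (Real.pi : ℂ)) * ((l : ℕ) : ℂ)))
        + ((2 * ((l : ℤ) - (n : ℤ)) : ℤ) : ℂ) * (2 * (Real.pi : ℂ) * Complex.I) by
      push_cast; ring]
  rw [Complex.exp_add, Complex.exp_int_mul_two_pi_mul_I, mul_one]

lemma key_sum {L : ℕ} (hL : 0 < L) (S : Fin L → ℂ) (A B : Fin L → Fin L → ℂ)
    (hB : ∀ k k' : Fin L, ∑ p : Fin L, B k p * B k' p = if k' = k.rev then (L : ℂ) else 0)
    (n l : Fin L) :
    ∑ p : Fin L, ((1 / (L : ℂ)) * ∑ k : Fin L, S k * (A k n * B k p))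
        * ((1 / (L : ℂ)) * ∑ k : Fin L, S k * (A k l * B k p))
      = (1 / (L : ℂ)) ^ 2 * (L : ℂ)
          * ∑ k : Fin L, S k * S k.rev * (A k n * A k.rev l) := by
  calc
    ∑ p : Fin L, ((1 / (L : ℂ)) * ∑ k : Fin L, S k * (A k n * B k p))
        * ((1 / (L : ℂ)) * ∑ k : Fin L, S k * (A k l * B k p))
      = ∑ p : Fin L, ∑ k : Fin L, ∑ k' : Fin L,
          (1 / (L : ℂ)) ^ 2 * (S k * S k' * (A k n * A k' l)) * (B k p * B k' p) := by
        apply Finset.sum_congr rfl; intro p _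
        rw [show ((1 / (L : ℂ)) * ∑ k : Fin L, S k * (A k n * B k p))
              * ((1 / (L : ℂ)) * ∑ k : Fin L, S k * (A k l * B k p))
            = (1 / (L : ℂ)) ^ 2 * ((∑ k : Fin L, S k * (A k n * B k p))
              * (∑ k : Fin L, S k * (A k l * B k p))) by ring]
        rw [Finset.sum_mul_sum, Finset.mul_sum]
        apply Finset.sum_congr rfl; intro k _
        rw [Finset.mul_sum]
        apply Finset.sum_congr rfl; intro k' _
        ring
    _ = ∑ k : Fin L, ∑ k' : Fin L,
          (1 / (L : ℂ)) ^ 2 * (S k * S k' * (A k n * A k' l)) * ∑ p : Fin L, B k p * B k' p := by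
        rw [Finset.sum_comm]
        apply Finset.sum_congr rfl; intro k _
        rw [Finset.sum_comm]
        apply Finset.sum_congr rfl; intro k' _
        rw [← Finset.mul_sum]
    _ = ∑ k : Fin L, (1 / (L : ℂ)) ^ 2 * (S k * S k.rev * (A k n * A k.rev l)) * (L : ℂ) := by
        apply Finset.sum_congr rfl; intro k _
        simp only [hB, mul_ite, mul_zero]
        rw [Finset.sum_ite_eq' Finset.univ k.rev
          (fun k' => (1 / (L : ℂ)) ^ 2 * (S k * S k' * (A k n * A k' l)) * (L : ℂ))]
        simp
    _ = (1 / (L : ℂ)) ^ 2 * (L : ℂ) * ∑ k : Fin L, S k * S k.rev * (A k n * A k.rev l) := by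
        rw [Finset.mul_sum]
        apply Finset.sum_congr rfl; intro k _
        ring

end ZmAux

/-- **Reality and orthogonality.**  If `m ≥ 1`, `2m ∣ L` and `L/(2m)` is even,
then `G^{(z^m+z^{-m})}(L)` has real entries and is orthogonal:
`G · Gᵀ = I_L`. -/
theorem zm_plus_zminv_real_orthogonal (m L : ℕ) (hm : 1 ≤ m) (hL : 0 < L)
    (hdvd : 2 * m ∣ L) (hMeven : Even (L / (2 * m))) :
    (∀ j k : Fin L, (Gf L (fun z => z ^ (m : ℤ) + z ^ (-(m : ℤ))) j k).im = 0) ∧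
    Gf L (fun z => z ^ (m : ℤ) + z ^ (-(m : ℤ))) *
      (Gf L (fun z => z ^ (m : ℤ) + z ^ (-(m : ℤ))))ᵀ = 1 := by
  have hc : ∀ k : Fin L, Real.cos (m * theta L k) ≠ 0 :=
    ZmAux.cos_ne m L hm hL hdvd hMeven
  have hL0 : (L : ℂ) ≠ 0 := Nat.cast_ne_zero.mpr hL.ne'
  constructor
  · intro j k
    exact Complex.conj_eq_iff_im.mp (ZmAux.entry_conj m L hL hc j k)
  · ext n l
    rw [Matrix.mul_apply]
    simp only [Matrix.transpose_apply]
    have hmain := ZmAux.key_sum hL (fun k => ((ZmAux.sg m L k : ℝ) : ℂ))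
      (fun k q => Complex.exp (Complex.I * ((theta L k : ℂ) + (Real.pi : ℂ)) * ((q : ℕ) : ℂ)))
      (fun k q => Complex.exp (-(Complex.I * ((theta L k : ℂ) + (Real.pi : ℂ)) * ((q : ℕ) : ℂ))))
      (ZmAux.sum_B L hL) n l
    beta_reduce at hmain
    calc
      ∑ p : Fin L, Gf L (fun z => z ^ (m : ℤ) + z ^ (-(m : ℤ))) n p
          * Gf L (fun z => z ^ (m : ℤ) + z ^ (-(m : ℤ))) l p
        = ∑ p : Fin L,
            ((1 / (L : ℂ)) * ∑ k : Fin L, ((ZmAux.sg m L k : ℝ) : ℂ)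
              * (Complex.exp (Complex.I * ((theta L k : ℂ) + (Real.pi : ℂ)) * ((n : ℕ) : ℂ))
                 * Complex.exp (-(Complex.I * ((theta L k : ℂ) + (Real.pi : ℂ)) * ((p : ℕ) : ℂ)))))
            * ((1 / (L : ℂ)) * ∑ k : Fin L, ((ZmAux.sg m L k : ℝ) : ℂ)
              * (Complex.exp (Complex.I * ((theta L k : ℂ) + (Real.pi : ℂ)) * ((l : ℕ) : ℂ))
                 * Complex.exp (-(Complex.I * ((theta L k : ℂ) + (Real.pi : ℂ)) * ((p : ℕ) : ℂ))))) := by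
          apply Finset.sum_congr rfl; intro p _
          rw [ZmAux.Gf_entry m L hL hc n p, ZmAux.Gf_entry m L hL hc l p]
      _ = (1 / (L : ℂ)) ^ 2 * (L : ℂ)
            * ∑ k : Fin L, ((ZmAux.sg m L k : ℝ) : ℂ) * ((ZmAux.sg m L k.rev : ℝ) : ℂ)
              * (Complex.exp (Complex.I * ((theta L k : ℂ) + (Real.pi : ℂ)) * ((n : ℕ) : ℂ))
                 * Complex.exp (Complex.I * ((theta L k.rev : ℂ) + (Real.pi : ℂ)) * ((l : ℕ) : ℂ))) := hmain
      _ = (1 / (L : ℂ)) ^ 2 * (L : ℂ)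
            * ∑ k : Fin L,
                Complex.exp (Complex.I * (theta L k : ℂ) * ((((n : ℤ) - (l : ℤ)) : ℤ) : ℂ))
                  * Complex.exp (Complex.I * (Real.pi : ℂ) * ((((n : ℤ) - (l : ℤ)) : ℤ) : ℂ)) := by
          congr 1
          apply Finset.sum_congr rfl; intro k _
          rw [ZmAux.sg_rev m L hL k, ← Complex.ofReal_mul, ZmAux.sg_mul_self m L k (hc k),
            Complex.ofReal_one, one_mul, ZmAux.theta_rev L hL k]
          rw [← Complex.exp_add, ← Complex.exp_add]
          rw [show Complex.I * ((theta L k : ℂ) + (Real.pi : ℂ)) * ((n : ℕ) : ℂ)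
                + Complex.I * (((2 * Real.pi - theta L k : ℝ) : ℂ) + (Real.pi : ℂ)) * ((l : ℕ) : ℂ)
              = (Complex.I * (theta L k : ℂ) * ((((n : ℤ) - (l : ℤ)) : ℤ) : ℂ)
                  + Complex.I * (Real.pi : ℂ) * ((((n : ℤ) - (l : ℤ)) : ℤ) : ℂ))
                + ((2 * (l : ℤ) : ℤ) : ℂ) * (2 * (Real.pi : ℂ) * Complex.I) by push_cast; ring]
          rw [Complex.exp_add, Complex.exp_int_mul_two_pi_mul_I, mul_one]
      _ = (1 : Matrix (Fin L) (Fin L) ℂ) n l := by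
          rw [← Finset.sum_mul, ZmAux.sum_exp_theta L hL ((n : ℤ) - (l : ℤ))]
          simp only [ZmAux.dvd_iff_eq]
          by_cases h : n = l
          · subst h
            simp only [sub_self, Int.cast_zero, mul_zero, Complex.exp_zero, if_pos,
              one_mul, mul_one, Matrix.one_apply_eq]
            field_simp
            ring
            simp
          · simp [h, Matrix.one_apply]
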